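/- Let M be a Hausdorff, σ-compact, finite-dimensional smooth (C^∞) real manifold without boundary and let π : E → M be a smooth complex vector bundle of finite rank over M. If s is a smooth global section of E and x₀ ∈ M is a point with s(x₀) = 0, then there exist finitely many smooth global sections E₀, …, E_n of E and smooth complex-valued functions α₀, …, α_n ∈ C^∞(M, ℂ) with α₀(x₀) = … = α_n(x₀) = 0 such that s = α₀·E₀ + … + α_n·E_n. (Condition (2) of complete localization for the module of global smooth sections, part of Theorem 15.2.) -/

import Mathlib

open Bundle Set Metric
open scoped Manifold

/-- Auxiliary lemma: a function on the manifold obtained as the indicator (on the source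
of the extended chart at a point) of a smooth function on the model space composed with
the extended chart is smooth, provided it vanishes outside a closed set contained in
the chart source. -/
private lemma indicator_comp_extChartAt_contMDiff
    {m : ℕ} {B : Type*} [TopologicalSpace B]
    [ChartedSpace (EuclideanSpace ℝ (Fin m)) B]
    [IsManifold (𝓡 m) ((⊤ : ℕ∞) : WithTop ℕ∞) B]
    (x₀ : B) {G : Type*} [NormedAddCommGroup G] [NormedSpace ℝ G]
    {φ : EuclideanSpace ℝ (Fin m) → G} (hφ : ContDiff ℝ ((⊤ : ℕ∞) : WithTop ℕ∞) φ)
    {K : Set B} (hK : IsClosed K) (hKsrc : K ⊆ (extChartAt (𝓡 m) x₀).source)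
    (hsupp : ∀ z ∈ (extChartAt (𝓡 m) x₀).source,
      φ (extChartAt (𝓡 m) x₀ z) ≠ 0 → z ∈ K) :
    ContMDiff (𝓡 m) 𝓘(ℝ, G) ((⊤ : ℕ∞) : WithTop ℕ∞)
      ((extChartAt (𝓡 m) x₀).source.indicator
        (fun z => φ (extChartAt (𝓡 m) x₀ z))) := by
  intro y
  by_cases hy : y ∈ (extChartAt (𝓡 m) x₀).source
  · refine ContMDiffAt.congr_of_eventuallyEq
      (f := fun z => φ (extChartAt (𝓡 m) x₀ z)) ?_ ?_
    · refine (hφ.contMDiff.contMDiffAt).comp y ?_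
      refine (contMDiffOn_extChartAt).contMDiffAt ?_
      rw [extChartAt_source] at hy
      exact ((chartAt (EuclideanSpace ℝ (Fin m)) x₀).open_source).mem_nhds hy
    · filter_upwards [(isOpen_extChartAt_source x₀).mem_nhds hy] with z hz
      exact indicator_of_mem hz _
  · have hyK : y ∉ K := fun h => hy (hKsrc h)
    refine (contMDiffAt_const (c := (0 : G))).congr_of_eventuallyEq ?_
    filter_upwards [hK.isOpen_compl.mem_nhds hyK] with z hz
    by_cases hzs : z ∈ (extChartAt (𝓡 m) x₀).source
    · rw [indicator_of_mem hzs]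
      by_contra h
      exact hz (hsupp z hzs h)
    · exact indicator_of_notMem hzs _

/-- **Condition (2) of complete localization** (part of Theorem 15.2): for a smooth
complex vector bundle `E` of finite rank over a Hausdorff, σ-compact, finite-dimensional
smooth real manifold `B` without boundary, every smooth global section `s` vanishing at a
point `x₀` can be written as `s = α₀•E₀ + … + α_k•E_k` with finitely many smooth global
sections `E_i` and smooth complex functions `α_i` vanishing at `x₀`. -/
theorem section_vanishing_at_point_decomposition
    {m : ℕ} {B : Type*} [TopologicalSpace B]
    [ChartedSpace (EuclideanSpace ℝ (Fin m)) B]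
    [IsManifold (𝓡 m) ((⊤ : ℕ∞) : WithTop ℕ∞) B] [T2Space B] [SigmaCompactSpace B]
    (F : Type*) [NormedAddCommGroup F] [NormedSpace ℝ F] [NormedSpace ℂ F]
    [IsScalarTower ℝ ℂ F] [FiniteDimensional ℂ F]
    (E : B → Type*) [∀ x, AddCommGroup (E x)] [∀ x, Module ℝ (E x)] [∀ x, Module ℂ (E x)]
    [∀ x, TopologicalSpace (E x)] [TopologicalSpace (Bundle.TotalSpace F E)]
    [FiberBundle F E] [VectorBundle ℝ F E] [VectorBundle ℂ F E]
    [ContMDiffVectorBundle ((⊤ : ℕ∞) : WithTop ℕ∞) F E (𝓡 m)]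
    (s : ∀ y, E y)
    (hs : ContMDiff (𝓡 m) ((𝓡 m).prod 𝓘(ℝ, F)) (⊤ : ℕ∞)
      fun y => Bundle.TotalSpace.mk' F y (s y))
    (x₀ : B) (hs₀ : s x₀ = 0) :
    ∃ (k : ℕ) (sec : Fin k → ∀ y, E y) (α : Fin k → B → ℂ),
      (∀ i, ContMDiff (𝓡 m) ((𝓡 m).prod 𝓘(ℝ, F)) (⊤ : ℕ∞)
        fun y => Bundle.TotalSpace.mk' F y (sec i y)) ∧
      (∀ i, ContMDiff (𝓡 m) 𝓘(ℝ, ℂ) (⊤ : ℕ∞) (α i)) ∧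
      (∀ i, α i x₀ = 0) ∧
      (∀ y, s y = ∑ i, α i y • sec i y) := by
  classical
  set e := extChartAt (𝓡 m) x₀ with he_def
  set triv := trivializationAt F E x₀ with htriv_def
  have hx₀b : x₀ ∈ triv.baseSet := mem_baseSet_trivializationAt F E x₀
  have hx₀s : x₀ ∈ e.source := mem_extChartAt_source x₀
  set U : Set B := triv.baseSet ∩ e.source with hU_def
  have hU_open : IsOpen U := triv.open_baseSet.inter (isOpen_extChartAt_source x₀)
  have hx₀U : x₀ ∈ U := ⟨hx₀b, hx₀s⟩
  set W : Set (EuclideanSpace ℝ (Fin m)) := e.target ∩ e.symm ⁻¹' U with hW_def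
  have hW_open : IsOpen W :=
    (continuousOn_extChartAt_symm x₀).isOpen_inter_preimage
      (isOpen_extChartAt_target x₀) hU_open
  have hv₀W : e x₀ ∈ W := by
    refine ⟨mem_extChartAt_target x₀, ?_⟩
    rw [mem_preimage, e.left_inv hx₀s]
    exact hx₀U
  obtain ⟨ε, hε0, hball⟩ := Metric.isOpen_iff.1 hW_open _ hv₀W
  have hcb : closedBall (e x₀) (ε / 2) ⊆ W :=
    (closedBall_subset_ball (by linarith)).trans hball
  set ρ : ContDiffBump (e x₀) := ⟨ε / 8, ε / 4, by positivity, by linarith⟩ with hρ_def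
  set σb : ContDiffBump (e x₀) := ⟨ε / 4, ε / 2, by positivity, by linarith⟩ with hσ_def
  have hρ_supp : Function.support ρ ⊆ closedBall (e x₀) (ε / 2) := by
    rw [ρ.support_eq]
    exact ball_subset_closedBall.trans (closedBall_subset_closedBall (by show ε / 4 ≤ ε / 2; linarith))
  have hσ_supp : Function.support σb ⊆ closedBall (e x₀) (ε / 2) := by
    rw [σb.support_eq]
    exact ball_subset_closedBall
  have hσ_one : ∀ v, ρ v ≠ 0 → σb v = 1 := by
    intro v hv
    refine σb.one_of_mem_closedBall ?_
    have : v ∈ Metric.ball (e x₀) (ε / 4) := by rw [← ρ.support_eq]; exact hv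
    exact ball_subset_closedBall this
  set K : Set B := e.symm '' closedBall (e x₀) (ε / 2) with hK_def
  have hKU : K ⊆ U := by
    rintro _ ⟨v, hv, rfl⟩
    exact (hcb hv).2
  have hKsrc : K ⊆ e.source := fun z hz => (hKU hz).2
  have hK_cpt : IsCompact K :=
    (isCompact_closedBall _ _).image_of_continuousOn
      ((continuousOn_extChartAt_symm x₀).mono (hcb.trans inter_subset_left))
  have hK_closed : IsClosed K := hK_cpt.isClosed
  have hmemK : ∀ z ∈ e.source, e z ∈ closedBall (e x₀) (ε / 2) → z ∈ K :=
    fun z hz hb => ⟨e z, hb, e.left_inv hz⟩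
  -- the local representative of `s`
  set g : EuclideanSpace ℝ (Fin m) → F :=
    fun v => (triv (TotalSpace.mk' F (e.symm v) (s (e.symm v)))).2 with hg_def
  set f : EuclideanSpace ℝ (Fin m) → F := fun v => ρ v • g v with hf_def
  have hs_coord : ∀ y ∈ triv.baseSet,
      ContMDiffAt (𝓡 m) 𝓘(ℝ, F) ((⊤ : ℕ∞) : WithTop ℕ∞) (fun x => (triv (TotalSpace.mk' F x (s x))).2) y := by
    intro y hy
    have hmem : TotalSpace.mk' F y (s y) ∈ triv.source := triv.mem_source.2 hy
    exact ((triv.contMDiffAt_iff (f := fun x => TotalSpace.mk' F x (s x)) hmem).1 (hs y)).2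
  have hf_cd : ContDiff ℝ ((⊤ : ℕ∞) : WithTop ℕ∞) f := by
    rw [contDiff_iff_contDiffAt]
    intro v
    by_cases hv : v ∈ W
    · have h1 : ContMDiffAt 𝓘(ℝ, EuclideanSpace ℝ (Fin m)) (𝓡 m) ((⊤ : ℕ∞) : WithTop ℕ∞) e.symm v :=
        (contMDiffOn_extChartAt_symm x₀).contMDiffAt
          ((isOpen_extChartAt_target x₀).mem_nhds hv.1)
      have h2 := (hs_coord (e.symm v) hv.2.1).comp v h1
      have h3 : ContDiffAt ℝ ((⊤ : ℕ∞) : WithTop ℕ∞) g v := contMDiffAt_iff_contDiffAt.1 h2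
      rw [hf_def]
      exact (ρ.contDiff.contDiffAt).smul h3
    · refine (contDiffAt_const (c := (0 : F))).congr_of_eventuallyEq ?_
      have hv' : v ∈ (closedBall (e x₀) (ε / 2))ᶜ := fun h => hv (hcb h)
      filter_upwards [Metric.isClosed_closedBall.isOpen_compl.mem_nhds hv'] with z hz
      have hρz : ρ z = 0 := by
        by_contra h
        exact hz (hρ_supp (Function.mem_support.2 h))
      simp only [hf_def, hρz, zero_smul]
  have hfv₀ : f (e x₀) = 0 := by
    have h1 : e.symm (e x₀) = x₀ := e.left_inv hx₀s
    have hmk : TotalSpace.mk' F (e.symm (e x₀)) (s (e.symm (e x₀)))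
        = TotalSpace.mk' F x₀ (s x₀) := by rw [h1]
    have h2 : g (e x₀) = 0 := by
      simp only [hg_def]
      rw [hmk, hs₀]
      exact congr_arg Prod.snd (triv.zeroSection ℝ hx₀b)
    simp only [hf_def, h2, smul_zero]
  -- a complex basis of the fiber and the coordinates of `f`
  set d := Module.finrank ℂ F with hd_def
  set b := Module.finBasis ℂ F with hb_def
  set coordL : Fin d → F →L[ℂ] ℂ :=
    fun i => LinearMap.toContinuousLinearMap (b.coord i) with hcoordL_def
  set fc : Fin d → EuclideanSpace ℝ (Fin m) → ℂ := fun i v => coordL i (f v) with hfc_def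
  have hfc_cd : ∀ i, ContDiff ℝ ((⊤ : ℕ∞) : WithTop ℕ∞) (fc i) :=
    fun i => ((coordL i).restrictScalars ℝ).contDiff.comp hf_cd
  have hfc_supp : ∀ i v, fc i v ≠ 0 → ρ v ≠ 0 := by
    intro i v h hρv
    apply h
    simp only [hfc_def, hf_def, hρv, zero_smul, map_zero]
  have hfcv₀ : ∀ i, fc i (e x₀) = 0 := by
    intro i
    simp only [hfc_def, hfv₀, map_zero]
  -- the cut-off functions on the manifold
  set χ : B → ℝ := e.source.indicator (fun z => ρ (e z)) with hχ_def
  set ψ : B → ℝ := e.source.indicator (fun z => σb (e z)) with hψ_def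
  set α' : Fin d → B → ℂ :=
    fun i => e.source.indicator (fun z => fc i (e z)) with hα'_def
  set sec' : Fin d → ∀ y, E y := fun i z => triv.symmₗ ℝ z (ψ z • b i) with hsec'_def
  have hχ : ContMDiff (𝓡 m) 𝓘(ℝ, ℝ) ((⊤ : ℕ∞) : WithTop ℕ∞) χ := by
    refine indicator_comp_extChartAt_contMDiff x₀ ρ.contDiff hK_closed hKsrc ?_
    intro z hz h
    exact hmemK z hz (hρ_supp (Function.mem_support.2 h))
  have hψs : ContMDiff (𝓡 m) 𝓘(ℝ, ℝ) ((⊤ : ℕ∞) : WithTop ℕ∞) ψ := by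
    refine indicator_comp_extChartAt_contMDiff x₀ σb.contDiff hK_closed hKsrc ?_
    intro z hz h
    exact hmemK z hz (hσ_supp (Function.mem_support.2 h))
  have hα' : ∀ i, ContMDiff (𝓡 m) 𝓘(ℝ, ℂ) ((⊤ : ℕ∞) : WithTop ℕ∞) (α' i) := by
    intro i
    refine indicator_comp_extChartAt_contMDiff x₀ (hfc_cd i) hK_closed hKsrc ?_
    intro z hz h
    exact hmemK z hz (hρ_supp (Function.mem_support.2 (hfc_supp i (e z) h)))
  have hχx₀ : χ x₀ = 1 := by
    rw [hχ_def, indicator_of_mem hx₀s]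
    exact ρ.one_of_mem_closedBall (mem_closedBall_self (by positivity))
  have hα'x₀ : ∀ i, α' i x₀ = 0 := by
    intro i
    simp only [hα'_def]
    simp only [indicator_of_mem hx₀s, hfcv₀ i]
  have hψ0 : ∀ z, z ∉ K → ψ z = 0 := by
    intro z hz
    rw [hψ_def]
    by_cases hzs : z ∈ e.source
    · rw [indicator_of_mem hzs]
      by_contra h
      exact hz (hmemK z hzs (hσ_supp (Function.mem_support.2 h)))
    · exact indicator_of_notMem hzs _
  have hχ0 : ∀ z, z ∉ K → χ z = 0 := by
    intro z hz
    rw [hχ_def]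
    by_cases hzs : z ∈ e.source
    · rw [indicator_of_mem hzs]
      by_contra h
      exact hz (hmemK z hzs (hρ_supp (Function.mem_support.2 h)))
    · exact indicator_of_notMem hzs _
  have hα'0 : ∀ i z, z ∉ K → α' i z = 0 := by
    intro i z hz
    simp only [hα'_def]
    by_cases hzs : z ∈ e.source
    · rw [indicator_of_mem hzs]
      by_contra h
      exact hz (hmemK z hzs (hρ_supp (Function.mem_support.2 (hfc_supp i (e z) h))))
    · exact indicator_of_notMem hzs _
  have hsec'0 : ∀ i z, z ∉ K → sec' i z = 0 := by
    intro i z hz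
    rw [hsec'_def]
    simp only [hψ0 z hz, zero_smul]
    exact (triv.symmₗ ℝ z).map_zero
  -- smoothness of the cut-off constant sections
  have hsec' : ∀ i, ContMDiff (𝓡 m) ((𝓡 m).prod 𝓘(ℝ, F)) ((⊤ : ℕ∞) : WithTop ℕ∞)
      fun y => TotalSpace.mk' F y (sec' i y) := by
    intro i y
    by_cases hy : y ∈ triv.baseSet
    · have hmem : TotalSpace.mk' F y (sec' i y) ∈ triv.source := triv.mem_source.2 hy
      refine (triv.contMDiffAt_iff
        (f := fun z => TotalSpace.mk' F z (sec' i z)) (x₀ := y) hmem).2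
        ⟨contMDiffAt_id, ?_⟩
      refine ContMDiffAt.congr_of_eventuallyEq
        (ContMDiffAt.smul (hψs y) contMDiffAt_const
          (g := fun _ => b i) (f := ψ)) ?_
      filter_upwards [triv.open_baseSet.mem_nhds hy] with z hz
      simp only [hsec'_def, triv.symmₗ_apply (R := ℝ) hz]
      exact congr_arg Prod.snd (triv.apply_mk_symm hz _)
    · have hyK : y ∉ K := fun h => hy (hKU h).1
      refine ContMDiffAt.congr_of_eventuallyEq
        ((Bundle.contMDiff_zeroSection ℝ E) y) ?_
      filter_upwards [hK_closed.isOpen_compl.mem_nhds hyK] with z hz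
      rw [hsec'0 i z hz]
      rfl
  -- the key algebraic identity
  have key : ∀ y, (χ y : ℂ) • s y = ∑ i, α' i y • sec' i y := by
    intro y
    by_cases hy : y ∈ U
    · have hyb : y ∈ triv.baseSet := hy.1
      have hys : y ∈ e.source := hy.2
      have hsymm_e : e.symm (e y) = y := e.left_inv hys
      have hψy : ψ y = σb (e y) := indicator_of_mem hys _
      have hterm : ∀ i, α' i y • sec' i y
          = triv.symmₗ ℂ y (fc i (e y) • σb (e y) • (b i : F)) := by
        intro i
        simp only [hα'_def]
        simp only [indicator_of_mem hys]
        rw [hsec'_def]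
        simp only [hψy]
        rw [triv.symmₗ_apply (R := ℝ) hyb, ← triv.coe_symmₗ (R := ℂ) hyb, ← map_smul]
      rw [Finset.sum_congr rfl (fun i _ => hterm i), ← map_sum]
      have h1 : (∑ i, fc i (e y) • σb (e y) • (b i : F)) = σb (e y) • f (e y) := by
        have : ∀ i : Fin d, fc i (e y) • σb (e y) • (b i : F)
            = σb (e y) • (fc i (e y) • (b i : F)) := fun i => smul_comm _ _ _
        rw [Finset.sum_congr rfl (fun i _ => this i), ← Finset.smul_sum]
        congr 1
        have : ∀ i : Fin d, fc i (e y) = b.repr (f (e y)) i := by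
          intro i
          simp only [hfc_def, hcoordL_def, LinearMap.coe_toContinuousLinearMap',
            Module.Basis.coord_apply]
        rw [Finset.sum_congr rfl (fun i _ => by rw [this i])]
        exact b.sum_repr (f (e y))
      rw [h1]
      have h2 : σb (e y) • f (e y) = χ y • g (e y) := by
        rw [hχ_def]
        simp only [indicator_of_mem hys]
        rw [hf_def]
        by_cases hρy : ρ (e y) = 0
        · simp only [hρy, zero_smul, smul_zero]
        · rw [hσ_one _ hρy, one_smul]
      rw [h2]
      have hmk : TotalSpace.mk' F (e.symm (e y)) (s (e.symm (e y)))
          = TotalSpace.mk' F y (s y) := by rw [hsymm_e]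
      have h3 : g (e y) = (triv (TotalSpace.mk' F y (s y))).2 := by
        simp only [hg_def]
        rw [hmk]
      rw [h3]
      have h4 : (χ y) • (triv (TotalSpace.mk' F y (s y))).2
          = (χ y : ℂ) • (triv (TotalSpace.mk' F y (s y))).2 := by
        rw [← algebraMap_smul ℂ (χ y) ((triv (TotalSpace.mk' F y (s y))).2)]
        norm_cast
      rw [h4, map_smul]
      congr 1
      rw [triv.coe_symmₗ (R := ℂ) hyb]
      exact (triv.symm_apply_apply_mk hyb (s y)).symm
    · have hyK : y ∉ K := fun h => hy (hKU h)
      rw [hχ0 y hyK]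
      simp only [Complex.ofReal_zero, zero_smul]
      rw [Finset.sum_congr rfl (fun i _ => by rw [hα'0 i y hyK, zero_smul])]
      simp
  -- assemble
  refine ⟨d + 1, Fin.cons s sec', Fin.cons (fun y => 1 - (χ y : ℂ)) α', ?_, ?_, ?_, ?_⟩
  · intro i
    refine Fin.cases ?_ ?_ i
    · simpa using hs
    · intro j
      simpa using hsec' j
  · intro i
    refine Fin.cases ?_ ?_ i
    · simp only [Fin.cons_zero]
      exact contMDiff_const.sub (Complex.ofRealCLM.contDiff.contMDiff.comp hχ)
    · intro j
      simpa using hα' j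
  · intro i
    refine Fin.cases ?_ ?_ i
    · simp [hχx₀]
    · intro j
      simpa using hα'x₀ j
  · intro y
    rw [Fin.sum_univ_succ]
    simp only [Fin.cons_zero, Fin.cons_succ]
    rw [← key y, sub_smul, one_smul, sub_add_cancel]
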